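/- arXiv:2106.01173 — 5 statements merged into one kernel-verified Lean document; each statement's English description precedes it below -/
import Mathlib

section
/- For every k ≥ 1, S_k = S_{k-1} · ŜS_{k-1}, where for a non-empty binary string w, ŵ denotes the string obtained from w by flipping its last character. That is, the two definitions of the period-doubling sequence (via the morphism φ(a)=ab, φ(b)=aa, and via the doubling recurrence S_k = S_{k-1}·Ŝ_{k-1}) coincide. -/
/-- The morphism φ: a ↦ ab, b ↦ aa, with `false = a`, `true = b`. -/
def pdPhi (c : Bool) : List Bool := if c then [false, false] else [false, true]

/-- The k-th period-doubling sequence. -/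
def pd : ℕ → List Bool
  | 0 => [false]
  | k + 1 => (pd k).flatMap pdPhi

/-- `hat w` : `w` with its last character flipped. -/
def hat (w : List Bool) : List Bool := w.dropLast ++ (w.getLast?.map Bool.not).toList

lemma hat_concat (l : List Bool) (c : Bool) : hat (l ++ [c]) = l ++ [!c] := by
  simp [hat]

lemma pd_ne_nil (k : ℕ) : pd k ≠ [] := by
  induction k with
  | zero => simp [pd]
  | succ k ih =>
    obtain ⟨c, l, h⟩ := List.exists_cons_of_ne_nil ih
    rw [show pd (k+1) = (pd k).flatMap pdPhi from rfl, h]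
    cases c <;> simp [pd, pdPhi]

lemma pd_succ (k : ℕ) : pd (k + 1) = pd k ++ hat (pd k) := by
  induction k with
  | zero => rfl
  | succ k ih =>
    obtain ⟨l, c, hl⟩ := (List.eq_nil_or_concat (pd k)).resolve_left (pd_ne_nil k)
    have h1 : pd (k + 2) = (pd k ++ hat (pd k)).flatMap pdPhi := by
      rw [show pd (k+2) = (pd (k+1)).flatMap pdPhi from rfl, ih]
    rw [List.concat_eq_append] at hl
    rw [h1, hl, hat_concat]
    have : pd (k + 1) = l.flatMap pdPhi ++ pdPhi c := by
      rw [show pd (k+1) = (pd k).flatMap pdPhi from rfl, hl]; simp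
    rw [this]
    have h2 : ∀ (x : List Bool) (b : Bool), hat (x ++ [false, b]) = x ++ [false, !b] := by
      intro x b
      simpa using hat_concat (x ++ [false]) b
    cases c <;> simp [pdPhi, List.flatMap_append, h2]

theorem pd_doubling (k : ℕ) (hk : 1 ≤ k) : pd k = pd (k - 1) ++ hat (pd (k - 1)) := by
  obtain ⟨n, rfl⟩ := Nat.exists_eq_add_of_le hk
  rw [Nat.add_comm]; simpa using pd_succ n
end

section
/- For every k ≥ 0, the period-doubling sequence S_k is primitive, i.e., S_k cannot be written as x^j for any string x and integer j ≥ 2. -/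
/-- A string is primitive if it is not a proper power `x^j` with `j ≥ 2`. -/
def Primitive {α : Type*} (w : List α) : Prop :=
  ∀ (x : List α) (j : ℕ), 2 ≤ j → w ≠ (List.replicate j x).flatten

lemma hat_append (u v : List Bool) (hv : v ≠ []) : hat (u ++ v) = u ++ hat v := by
  unfold hat
  rw [List.dropLast_append_of_ne_nil hv, List.getLast?_append_of_ne_nil _ hv,
    List.append_assoc]

lemma hat_singleton (c : Bool) : hat [c] = [!c] := by cases c <;> rfl

lemma hat_flatMap (w : List Bool) : hat (w.flatMap pdPhi) = (hat w).flatMap pdPhi := by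
  induction w using List.reverseRecOn with
  | nil => rfl
  | append_singleton w c ih =>
      have hc : pdPhi c ≠ [] := by cases c <;> simp [pdPhi]
      rw [List.flatMap_append, hat_append w [c] (by simp)]
      simp only [List.flatMap_cons, List.flatMap_nil, List.append_nil]
      rw [hat_append _ _ hc, hat_singleton, List.flatMap_append]
      simp only [List.flatMap_cons, List.flatMap_nil, List.append_nil]
      congr 1
      cases c <;> decide

lemma hat_length (w : List Bool) (hw : w ≠ []) : (hat w).length = w.length := by
  unfold hat
  rw [List.getLast?_eq_getLast hw]
  have := List.length_pos_iff.mpr hw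
  simp
  omega

lemma pd_length (k : ℕ) : (pd k).length = 2 ^ k := by
  induction k with
  | zero => rfl
  | succ k ih =>
      have hne : pd k ≠ [] := by
        intro h
        rw [h] at ih
        have : 0 < 2 ^ k := Nat.pow_pos (by norm_num)
        simp at ih
        omega
      rw [pd_succ, List.length_append, hat_length _ hne, ih]
      ring

lemma pd_halves_ne (k : ℕ) (h1 : 2^k - 1 < (pd (k+1)).length)
    (h2 : 2^k + (2^k - 1) < (pd (k+1)).length) :
    (pd (k+1))[2^k - 1] ≠ (pd (k+1))[2^k + (2^k - 1)] := by
  have hw := pd_ne_nil k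
  have hl := pd_length k
  have hpos : 0 < (pd k).length := List.length_pos_iff.mpr hw
  have hhat : hat (pd k) = (pd k).dropLast ++ [! (pd k).getLast hw] := by
    unfold hat
    rw [List.getLast?_eq_getLast hw]
    rfl
  have hsp := pd_succ k
  rw [List.getElem_of_eq hsp, List.getElem_of_eq hsp]
  rw [List.getElem_append_left (by omega : 2^k - 1 < (pd k).length),
    List.getElem_append_right (by omega : (pd k).length ≤ 2^k + (2^k - 1))]
  have hlast : (pd k)[2^k - 1]'(by omega) = (pd k).getLast hw := by
    rw [List.getLast_eq_getElem]
    congr 1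
    omega
  rw [hlast]
  have hlen2 : (hat (pd k)).length = (pd k).length := hat_length _ hw
  have hidxlt : 2^k + (2^k - 1) - (pd k).length < (hat (pd k)).length := by omega
  have : (hat (pd k))[2^k + (2^k - 1) - (pd k).length]'hidxlt = ! (pd k).getLast hw := by
    rw [List.getElem_of_eq hhat]
    rw [List.getElem_append_right (by simp [List.length_dropLast]; omega)]
    simp
  rw [this]
  simp

lemma flatten_replicate_getElem (x : List Bool) (hx : 0 < x.length) (j i : ℕ)
    (h : i < ((List.replicate j x).flatten).length) :
    (List.replicate j x).flatten[i] = x[i % x.length]'(Nat.mod_lt _ hx) := by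
  induction j generalizing i with
  | zero => simp at h
  | succ j ih =>
      have hrep : (List.replicate (j+1) x).flatten = x ++ (List.replicate j x).flatten := by
        rw [List.replicate_succ, List.flatten_cons]
      rw [List.getElem_of_eq hrep]
      have h' : i < (x ++ (List.replicate j x).flatten).length := hrep ▸ h
      by_cases hi : i < x.length
      · rw [List.getElem_append_left hi]
        congr 1
        exact (Nat.mod_eq_of_lt hi).symm
      · push_neg at hi
        rw [List.getElem_append_right hi]
        have hlt : i - x.length < ((List.replicate j x).flatten).length := by
          simp at h' ⊢; omega
        rw [ih (i - x.length) hlt]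
        congr 1
        conv_rhs => rw [Nat.mod_eq_sub_mod hi]

lemma flatten_replicate_length {α : Type*} (j : ℕ) (x : List α) :
    ((List.replicate j x).flatten).length = j * x.length := by
  induction j with
  | zero => simp
  | succ j ih => rw [List.replicate_succ, List.flatten_cons, List.length_append, ih]; ring

theorem pd_primitive (k : ℕ) : Primitive (pd k) := by
  intro x j hj heq
  have hlen : 2 ^ k = j * x.length := by
    rw [← pd_length k, heq, flatten_replicate_length]
  match k with
  | 0 =>
      have h1 : (1 : ℕ) = j * x.length := by simpa using hlen
      have : j ∣ 1 := ⟨x.length, h1⟩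
      have := Nat.le_of_dvd one_pos this
      omega
  | k + 1 =>
      have hxpos : 0 < x.length := by
        rcases Nat.eq_zero_or_pos x.length with h | h
        · rw [h, mul_zero] at hlen
          have : 0 < 2 ^ (k+1) := Nat.pow_pos (by norm_num)
          omega
        · exact h
      have hdvd : x.length ∣ 2 ^ (k + 1) := ⟨j, by rw [hlen]; ring⟩
      obtain ⟨d, hd, hxd⟩ := (Nat.dvd_prime_pow Nat.prime_two).mp hdvd
      have hdk : d ≤ k := by
        by_contra hdk
        have hdeq : d = k + 1 := by omega
        rw [hdeq] at hxd
        have heq1 : j * x.length = 1 * x.length := by rw [← hlen, hxd, one_mul]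
        have hj1 := Nat.eq_of_mul_eq_mul_right hxpos heq1
        omega
      have hdvd2 : x.length ∣ 2 ^ k := hxd ▸ pow_dvd_pow 2 hdk
      have hpk : 0 < 2 ^ k := Nat.pow_pos (by norm_num)
      have hL : (pd (k+1)).length = 2 ^ (k+1) := pd_length (k+1)
      have h1 : 2^k - 1 < (pd (k+1)).length := by rw [hL, pow_succ]; omega
      have h2 : 2^k + (2^k - 1) < (pd (k+1)).length := by rw [hL, pow_succ]; omega
      have hne := pd_halves_ne k h1 h2
      apply hne
      rw [List.getElem_of_eq heq, List.getElem_of_eq heq,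
        flatten_replicate_getElem x hxpos j _ (heq ▸ h1),
        flatten_replicate_getElem x hxpos j _ (heq ▸ h2)]
      congr 1
      obtain ⟨m, hm⟩ := hdvd2
      have hz : 2^k % x.length = 0 := by rw [hm, Nat.mul_mod_right]
      conv_rhs => rw [Nat.add_mod, hz, Nat.zero_add, Nat.mod_mod_of_dvd _ dvd_rfl]
end

section
/- If a string w is primitive, then ww has no internal occurrence of w; that is, the only occurrences of w as a substring of ww are at positions 1 and |w|+1. -/
/-- Commuting words are powers of a common word. -/
theorem comm_split {α : Type*} : ∀ (N : ℕ) (u v : List α), u.length + v.length ≤ N →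
    u ++ v = v ++ u →
    ∃ (x : List α) (k m : ℕ),
      u = (List.replicate k x).flatten ∧ v = (List.replicate m x).flatten := by
  intro N
  induction N with
  | zero =>
    intro u v hlen _
    have hu : u = [] := by
      cases u with
      | nil => rfl
      | cons a t => simp at hlen
    have hv : v = [] := by
      cases v with
      | nil => rfl
      | cons a t => simp at hlen
    exact ⟨[], 0, 0, by simp [hu], by simp [hv]⟩
  | succ n ih =>
    intro u v hlen h
    by_cases hu : u = []
    · exact ⟨v, 0, 1, by simp [hu], by simp⟩
    by_cases hv : v = []
    · exact ⟨u, 1, 0, by simp, by simp [hv]⟩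
    rcases le_total u.length v.length with hle | hle
    · -- u is a prefix of v
      have hup : v.take u.length = u := by
        have := congrArg (List.take u.length) h
        rw [List.take_left] at this
        rw [List.take_append, Nat.sub_eq_zero_of_le hle, List.take_zero,
          List.append_nil] at this
        exact this.symm
      set v' := v.drop u.length with hv'
      have hsplit : v = u ++ v' := by
        rw [← hup, hv', List.take_append_drop]
      have h2 : u ++ v' = v' ++ u := by
        have : u ++ (u ++ v') = (u ++ v') ++ u := by rw [← hsplit]; exact h
        rw [List.append_assoc] at this
        exact List.append_cancel_left this
      have hlen2 : u.length + v'.length ≤ n := by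
        have hupos : 1 ≤ u.length := by
          cases u with
          | nil => exact absurd rfl hu
          | cons a t => simp
        have : v'.length = v.length - u.length := by simp [hv']
        omega
      obtain ⟨x, k, m, hxu, hxv'⟩ := ih u v' hlen2 h2
      refine ⟨x, k, k + m, hxu, ?_⟩
      rw [hsplit, hxu, hxv', ← List.flatten_append, ← List.replicate_add]
    · -- v is a prefix of u
      have hup : u.take v.length = v := by
        have := congrArg (List.take v.length) h.symm
        rw [List.take_left] at this
        rw [List.take_append, Nat.sub_eq_zero_of_le hle, List.take_zero,
          List.append_nil] at this
        exact this.symm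
      set u' := u.drop v.length with hu'
      have hsplit : u = v ++ u' := by
        rw [← hup, hu', List.take_append_drop]
      have h2 : v ++ u' = u' ++ v := by
        have : v ++ (v ++ u') = (v ++ u') ++ v := by rw [← hsplit]; exact h.symm
        rw [List.append_assoc] at this
        exact List.append_cancel_left this
      have hlen2 : v.length + u'.length ≤ n := by
        have hvpos : 1 ≤ v.length := by
          cases v with
          | nil => exact absurd rfl hv
          | cons a t => simp
        have : u'.length = u.length - v.length := by simp [hu']
        omega
      obtain ⟨x, k, m, hxv, hxu'⟩ := ih v u' hlen2 h2
      refine ⟨x, k + m, k, ?_, hxv⟩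
      rw [hsplit, hxv, hxu', ← List.flatten_append, ← List.replicate_add]

/-- If `w` is primitive then `ww` has no internal occurrence of `w`:
the only occurrences of `w` in `ww` are at positions `0` and `|w|` (0-based). -/
theorem primitive_square_no_internal_occurrence {α : Type*} (w : List α)
    (hw : Primitive w) (i : ℕ) (hi : i + w.length ≤ (w ++ w).length)
    (hocc : ((w ++ w).drop i).take w.length = w) :
    i = 0 ∨ i = w.length := by
  set n := w.length with hn
  rw [List.length_append] at hi
  by_cases h0 : i = 0
  · exact Or.inl h0
  by_cases hin : i = n
  · exact Or.inr hin
  exfalso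
  have hilt : i < n := by omega
  -- rewrite hocc
  have hdrop : (w ++ w).drop i = w.drop i ++ w := by
    rw [List.drop_append]
    congr 1
    rw [show i - w.length = 0 by omega, List.drop_zero]
  rw [hdrop, List.take_append] at hocc
  have hlen_drop : (w.drop i).length = n - i := by simp [hn]
  rw [List.take_of_length_le (by omega), hlen_drop,
    show n - (n - i) = i by omega] at hocc
  -- hocc : w.drop i ++ w.take i = w
  have hvu : w.drop i ++ w.take i = w := hocc
  have huv : w.take i ++ w.drop i = w := List.take_append_drop i w
  have hcomm : w.take i ++ w.drop i = w.drop i ++ w.take i := by rw [huv, hvu]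
  obtain ⟨x, k, m, hxu, hxv⟩ :=
    comm_split ((w.take i).length + (w.drop i).length) (w.take i) (w.drop i)
      le_rfl hcomm
  have hxlen : x.length * k = (w.take i).length := by
    have := congrArg List.length hxu
    simpa [List.length_flatten, mul_comm] using this.symm
  have hxlen2 : x.length * m = (w.drop i).length := by
    have := congrArg List.length hxv
    simpa [List.length_flatten, mul_comm] using this.symm
  have hutake : (w.take i).length = i := by simp; omega
  have hk : 1 ≤ k := by
    rcases Nat.eq_zero_or_pos k with hk0 | hk0
    · exfalso; rw [hk0] at hxlen; simp [hutake] at hxlen; omega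
    · exact hk0
  have hm : 1 ≤ m := by
    rcases Nat.eq_zero_or_pos m with hm0 | hm0
    · exfalso; rw [hm0] at hxlen2; rw [hlen_drop] at hxlen2; simp at hxlen2; omega
    · exact hm0
  apply hw x (k + m) (by omega)
  rw [← huv, hxu, hxv, ← List.flatten_append, ← List.replicate_add]
end

section
/- For every k ≥ 2, the string A_k occurs exactly 3 times as a substring of S_k = A_k B_k A_k A_k, where A_k = S_{k-2} and B_k = Â_k. -/
/-- `y` occurs in `w` at (0-based) position `i`. -/
def OccAt {α : Type*} (y w : List α) (i : ℕ) : Prop :=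
  i + y.length ≤ w.length ∧ (w.drop i).take y.length = y

/-- The number of occurrences (starting positions) of `y` in `w`. -/
def occCount {α : Type*} [DecidableEq α] (y w : List α) : ℕ :=
  ((List.range (w.length + 1)).filter
    (fun i => decide (i + y.length ≤ w.length ∧ (w.drop i).take y.length = y))).length


lemma flat_length (l : List Bool) : (l.flatMap pdPhi).length = 2 * l.length := by
  induction l with
  | nil => simp
  | cons c t ih => cases c <;> simp [pdPhi, ih] <;> ring

lemma flat_drop (i : ℕ) : ∀ (l : List Bool), (l.flatMap pdPhi).drop (2*i) = (l.drop i).flatMap pdPhi := by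
  induction i with
  | zero => simp
  | succ i ih =>
    intro l
    cases l with
    | nil => simp
    | cons c t =>
      have h2 : 2*(i+1) = 2*i + 1 + 1 := by ring
      cases c <;> simp [pdPhi, h2, List.drop_succ_cons, ih t]

lemma flat_take (i : ℕ) : ∀ (l : List Bool), (l.flatMap pdPhi).take (2*i) = (l.take i).flatMap pdPhi := by
  induction i with
  | zero => simp
  | succ i ih =>
    intro l
    cases l with
    | nil => simp
    | cons c t =>
      have h2 : 2*(i+1) = 2 + 2*i := by ring
      cases c <;> simp [pdPhi, h2, List.take_add, ih t]

lemma flat_inj : ∀ (l₁ l₂ : List Bool), l₁.flatMap pdPhi = l₂.flatMap pdPhi → l₁ = l₂ := by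
  intro l₁
  induction l₁ with
  | nil => intro l₂ h; cases l₂ with
    | nil => rfl
    | cons c t => cases c <;> simp [pdPhi] at h
  | cons c t ih =>
    intro l₂ h
    cases l₂ with
    | nil => cases c <;> simp [pdPhi] at h
    | cons c' t' =>
      cases c <;> cases c' <;> simp [pdPhi] at h <;> simp_all [ih t' h]

lemma countP_double (P Q : ℕ → Prop) [DecidablePred P] [DecidablePred Q]
    (heven : ∀ i, Q (2*i) ↔ P i) (hodd : ∀ i, ¬ Q (2*i+1)) (n : ℕ) :
    (List.range (2*n+1)).countP (fun p => decide (Q p))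
      = (List.range (n+1)).countP (fun i => decide (P i)) := by
  induction n with
  | zero =>
    have := heven 0
    simp at this
    simp [List.range_succ, List.countP_cons, this]
  | succ n ih =>
    have h2 : 2*(n+1)+1 = (2*n+1) + 1 + 1 := by ring
    rw [h2, List.range_succ, List.range_succ, List.range_succ (n := n+1)]
    have hA : ¬ Q (2*n+1) := hodd n
    have hB : Q (2*n+1+1) ↔ P (n+1) := by
      have := heven (n+1); rwa [show 2*(n+1) = 2*n+1+1 by ring] at this
    simp [List.countP_append, ih, hA, hB, List.countP_cons]

lemma occCount_countP {α : Type*} [DecidableEq α] (y w : List α) :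
    occCount y w = (List.range (w.length+1)).countP
      (fun i => decide (i + y.length ≤ w.length ∧ (w.drop i).take y.length = y)) := by
  rw [occCount, List.countP_eq_length_filter]

lemma occ_step (t v : List Bool) :
    occCount ((false :: t).flatMap pdPhi) (v.flatMap pdPhi) = occCount (false :: t) v := by
  set u := false :: t with hu
  set U := u.flatMap pdPhi with hU
  set V := v.flatMap pdPhi with hV
  have hUlen : U.length = 2 * u.length := flat_length u
  have hVlen : V.length = 2 * v.length := flat_length v
  have heven : ∀ i, (2*i + U.length ≤ 2*v.length ∧ (V.drop (2*i)).take U.length = U)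
      ↔ (i + u.length ≤ v.length ∧ (v.drop i).take u.length = u) := by
    intro i
    rw [hUlen]
    constructor
    · rintro ⟨h1, h2⟩
      refine ⟨by omega, ?_⟩
      rw [hV, hU, flat_drop, flat_take] at h2
      exact flat_inj _ _ h2
    · rintro ⟨h1, h2⟩
      refine ⟨by omega, ?_⟩
      rw [hV, hU, flat_drop, flat_take, h2]
  have hodd : ∀ i, ¬ (2*i+1 + U.length ≤ 2*v.length ∧ (V.drop (2*i+1)).take U.length = U) := by
    rintro i ⟨h1, h2⟩
    have hul : 2 ≤ U.length := by rw [hUlen]; simp [hu]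
    -- element at index 1 of both sides
    have e1 : ((V.drop (2*i+1)).take U.length)[1]? = U[1]? := by rw [h2]
    have eU : U[1]? = some true := by simp [hU, hu, pdPhi]
    have e2 : ((V.drop (2*i+1)).take U.length)[1]? = V[2*i+2]? := by
      rw [List.getElem?_take, if_pos (by omega), List.getElem?_drop]
    have hlt : 2*(i+1) < V.length := by rw [hVlen]; omega
    have e3 : V[2*(i+1)]? = some false := by
      have hd : V.drop (2*(i+1)) = (v.drop (i+1)).flatMap pdPhi := flat_drop _ _
      have hne : V.drop (2*(i+1)) ≠ [] := by
        intro h; have : (V.drop (2*(i+1))).length = V.length - 2*(i+1) := List.length_drop; rw [h] at this; simp at this; omega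
      rw [← List.head?_drop]
      rw [hd] at hne ⊢
      rcases hq : v.drop (i+1) with _ | ⟨c, r⟩
      · rw [hq] at hne; simp at hne
      · cases c <;> simp [pdPhi]
    rw [show 2*i+2 = 2*(i+1) by ring] at e2
    rw [e1, eU, e3] at e2
    simp at e2
  rw [occCount_countP, occCount_countP, hVlen]
  exact countP_double
    (fun i => i + u.length ≤ v.length ∧ (v.drop i).take u.length = u)
    (fun p => p + U.length ≤ 2*v.length ∧ (V.drop p).take U.length = U)
    heven hodd v.length

lemma pd_cons (m : ℕ) : ∃ t, pd m = false :: t := by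
  induction m with
  | zero => exact ⟨[], rfl⟩
  | succ m ih =>
    obtain ⟨t, ht⟩ := ih
    exact ⟨true :: t.flatMap pdPhi, by simp [pd, ht, pdPhi]⟩

lemma pd_main (m : ℕ) : occCount (pd m) (pd (m+2)) = 3 := by
  induction m with
  | zero => decide
  | succ m ih =>
    obtain ⟨t, ht⟩ := pd_cons m
    have e1 : pd (m+1) = (pd m).flatMap pdPhi := rfl
    have e2 : pd (m+1+2) = (pd (m+2)).flatMap pdPhi := rfl
    rw [e1, e2, ht, occ_step t (pd (m+2)), ← ht]
    exact ih

theorem pd_three_occurrences (k : ℕ) (hk : 2 ≤ k) :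
    occCount (pd (k-2)) (pd k) = 3 := by
  obtain ⟨m, rfl⟩ : ∃ m, k = m + 2 := ⟨k - 2, by omega⟩
  simpa using pd_main m
end

section
/- If w is primitive, then any proper cyclic rotation α of w occurs exactly once as a substring of ww. -/
private lemma flatten_replicate_add {α : Type*} (c : List α) (i j : ℕ) :
    (List.replicate (i + j) c).flatten
      = (List.replicate i c).flatten ++ (List.replicate j c).flatten := by
  rw [List.replicate_add, List.flatten_append]

/-- Commuting words are powers of a common word. -/
private lemma comm_pow {α : Type*} :
    ∀ N (a b : List α), a.length + b.length ≤ N → a ++ b = b ++ a →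
      ∃ c i j, a = (List.replicate i c).flatten ∧ b = (List.replicate j c).flatten := by
  intro N
  induction N with
  | zero =>
    intro a b hlen _
    have ha : a = [] := List.eq_nil_of_length_eq_zero (by omega)
    have hb : b = [] := List.eq_nil_of_length_eq_zero (by omega)
    exact ⟨[], 0, 0, by simp [ha], by simp [hb]⟩
  | succ N ih =>
    intro a b hlen h
    rcases eq_or_ne a [] with rfl | ha
    · exact ⟨b, 0, 1, by simp, by simp⟩
    rcases eq_or_ne b [] with rfl | hb
    · exact ⟨a, 1, 0, by simp, by simp⟩
    rcases le_total a.length b.length with hab | hab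
    · have hpre : b.take a.length = a := by
        have h1 : (a ++ b).take a.length = a := by simp
        have h2 : (b ++ a).take a.length = b.take a.length :=
          List.take_append_of_le_length hab
        rw [h] at h1; rw [h2] at h1; exact h1
      set b' := b.drop a.length with hb'
      have hbdec : b = a ++ b' := by
        conv_lhs => rw [← List.take_append_drop a.length b]
        rw [hpre]
      have hcomm : a ++ b' = b' ++ a := by
        have : a ++ (a ++ b') = (a ++ b') ++ a := by rw [← hbdec]; exact h
        rw [List.append_assoc] at this
        exact List.append_cancel_left this
      have hlen' : a.length + b'.length ≤ N := by
        have h1 : b'.length = b.length - a.length := by simp [hb']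
        have h2 : 1 ≤ a.length := List.length_pos_iff.2 ha
        omega
      obtain ⟨c, i, j, hac, hbc⟩ := ih a b' hlen' hcomm
      exact ⟨c, i, i + j, hac, by rw [hbdec, flatten_replicate_add, hac, hbc]⟩
    · have hpre : a.take b.length = b := by
        have h1 : (b ++ a).take b.length = b := by simp
        have h2 : (a ++ b).take b.length = a.take b.length :=
          List.take_append_of_le_length hab
        rw [← h] at h1; rw [h2] at h1; exact h1
      set a' := a.drop b.length with ha'
      have hadec : a = b ++ a' := by
        conv_lhs => rw [← List.take_append_drop b.length a]
        rw [hpre]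
      have hcomm : b ++ a' = a' ++ b := by
        have : b ++ (b ++ a') = (b ++ a') ++ b := by rw [← hadec]; exact h.symm
        rw [List.append_assoc] at this
        exact List.append_cancel_left this
      have hlen' : b.length + a'.length ≤ N := by
        have h1 : a'.length = a.length - b.length := by simp [ha']
        have h2 : 1 ≤ b.length := List.length_pos_iff.2 hb
        omega
      obtain ⟨c, i, j, hbc, hac⟩ := ih b a' hlen' hcomm
      exact ⟨c, i + j, i, by rw [hadec, flatten_replicate_add, hbc, hac], hbc⟩

private lemma not_primitive_of_rotate {α : Type*} {w : List α} {d : ℕ}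
    (hd : 0 < d) (hdn : d < w.length) (h : w.rotate d = w) : ¬ Primitive w := by
  intro hw
  rw [List.rotate_eq_drop_append_take hdn.le] at h
  have hcomm : w.take d ++ w.drop d = w.drop d ++ w.take d := by
    rw [List.take_append_drop]; exact h.symm
  obtain ⟨c, i, j, hic, hjc⟩ :=
    comm_pow ((w.take d).length + (w.drop d).length) (w.take d) (w.drop d) le_rfl hcomm
  have hi : 1 ≤ i := by
    by_contra hcon
    have : i = 0 := by omega
    subst this
    have := congrArg List.length hic
    simp only [List.length_take, List.replicate_zero, List.flatten_nil, List.length_nil] at this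
    omega
  have hj : 1 ≤ j := by
    by_contra hcon
    have : j = 0 := by omega
    subst this
    have := congrArg List.length hjc
    simp only [List.length_drop, List.replicate_zero, List.flatten_nil, List.length_nil] at this
    omega
  exact hw c (i + j) (by omega) (by rw [← List.take_append_drop d w, hic, hjc,
    flatten_replicate_add])

/-- A proper cyclic rotation of a primitive string `w` occurs exactly once in `ww`. -/
theorem primitive_rotation_unique_occurrence {α : Type*} [DecidableEq α]
    (w : List α) (hw : Primitive w) (t : ℕ) (ht : t < w.length)
    (hproper : w.drop t ++ w.take t ≠ w) :
    occCount (w.drop t ++ w.take t) (w ++ w) = 1 := by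
  set n := w.length with hn
  have hα : (w.drop t ++ w.take t).length = n := by
    simp; omega
  have hrt : w.rotate t = w.drop t ++ w.take t := List.rotate_eq_drop_append_take ht.le
  -- rotations determine position
  have key : ∀ i ≤ n, w.rotate i = w.rotate t → i = t := by
    intro i hi hr
    by_contra hne
    have hwne : w.rotate t ≠ w := by rw [hrt]; exact hproper
    have hi0 : 0 < i := by
      rcases Nat.eq_zero_or_pos i with rfl | h
      · exact absurd (show w.rotate t = w by rw [← hr]; simp) hwne
      · exact h
    have hin : i < n := by
      rcases lt_or_eq_of_le hi with h | rfl
      · exact h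
      · exact absurd (by rw [← hr, hn]; exact w.rotate_length) hwne
    have hrot : w.rotate (t + (n - i)) = w := by
      rw [← List.rotate_rotate, ← hr, List.rotate_rotate,
        show i + (n - i) = n by omega, hn, w.rotate_length]
    rcases lt_or_gt_of_ne hne with hlt | hgt
    · -- i < t : rotate by t - i
      have : w.rotate (t - i) = w := by
        have : w.rotate (n + (t - i)) = w := by
          rw [show n + (t - i) = t + (n - i) by omega]; exact hrot
        rwa [← List.rotate_rotate, hn, w.rotate_length] at this
      exact not_primitive_of_rotate (by omega) (by omega) this hw
    · -- t < i
      exact not_primitive_of_rotate (d := t + (n - i)) (by omega) (by omega) hrot hw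
  -- each candidate position decides to `i = t`
  have hptw : ∀ i ∈ List.range ((w ++ w).length + 1),
      (decide (i + (w.drop t ++ w.take t).length ≤ (w ++ w).length ∧
        ((w ++ w).drop i).take (w.drop t ++ w.take t).length = w.drop t ++ w.take t))
        = (i == t) := by
    intro i _
    rw [Bool.eq_iff_iff, decide_eq_true_iff, beq_iff_eq]
    constructor
    · rintro ⟨h1, h2⟩
      have hile : i ≤ n := by
        rw [hα, List.length_append, ← hn] at h1; omega
      have hdrop : (w ++ w).drop i = w.drop i ++ w :=
        List.drop_append_of_le_length hile
      have htake : ((w ++ w).drop i).take n = w.drop i ++ w.take i := by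
        rw [hdrop, List.take_append, List.length_drop,
          List.take_of_length_le (by rw [List.length_drop, ← hn]; omega),
          show n - (n - i) = i by omega]
      apply key i hile
      rw [List.rotate_eq_drop_append_take hile, hrt, ← htake, ← hα, h2]
    · have hc1 : t + (w.drop t ++ w.take t).length ≤ (w ++ w).length := by
        rw [hα, List.length_append, ← hn]; omega
      have hc2 : ((w ++ w).drop t).take (w.drop t ++ w.take t).length
          = w.drop t ++ w.take t := by
        have hdrop : (w ++ w).drop t = w.drop t ++ w :=
          List.drop_append_of_le_length ht.le
        rw [hα, hdrop, List.take_append, List.length_drop,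
          List.take_of_length_le (by rw [List.length_drop, ← hn]; omega),
          show n - (n - t) = t by omega]
      rintro rfl
      exact ⟨hc1, hc2⟩
  rw [occCount, List.filter_congr hptw]
  have : (List.filter (fun i => i == t) (List.range ((w ++ w).length + 1))).length
      = List.count t (List.range ((w ++ w).length + 1)) := by
    rw [List.count, List.countP_eq_length_filter]
  rw [this]
  exact List.count_eq_one_of_mem List.nodup_range
    (List.mem_range.2 (by simp [hn]; omega))
end
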